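/- Let g : ℝ → ℝ be defined by g(u) = (1/2)f(u)·u − F(u), where f is C¹ with f(0)=0, F(u) = ∫₀ᵘ f(s) ds, and there exists θ ∈ (0,1) with 0 < u⁻¹f(u) ≤ θf'(u) for all u ≠ 0. Then g(u) ≥ (1/2 − θ/(1+θ))·f(u)·u > 0 for all u ≠ 0, and g(0) = 0; in particular g is nonnegative. -/

import Mathlib

theorem stmt_17 (f : ℝ → ℝ) (hf : ContDiff ℝ 1 f) (hf0 : f 0 = 0)
    (θ : ℝ) (hθ : θ ∈ Set.Ioo (0:ℝ) 1)
    (hcond : ∀ u : ℝ, u ≠ 0 → 0 < f u / u ∧ f u / u ≤ θ * deriv f u)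
    (F : ℝ → ℝ) (hF : ∀ u, F u = ∫ s in (0:ℝ)..u, f s)
    (g : ℝ → ℝ) (hg : ∀ u, g u = (1 / 2) * f u * u - F u) :
    (∀ u : ℝ, u ≠ 0 →
      g u ≥ (1 / 2 - θ / (1 + θ)) * (f u * u) ∧
      0 < (1 / 2 - θ / (1 + θ)) * (f u * u)) ∧
    g 0 = 0 ∧ (∀ u : ℝ, 0 ≤ g u) := by
  obtain ⟨hθ0, hθ1⟩ := hθ
  have h1θ : (0:ℝ) < 1 + θ := by linarith
  have hfc : Continuous f := hf.continuous
  have hFeq : F = fun u => ∫ s in (0:ℝ)..u, f s := funext hF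
  have hFderiv : ∀ x : ℝ, HasDerivAt F (f x) x := by
    intro x
    rw [hFeq]
    exact intervalIntegral.integral_hasDerivAt_right
      (hfc.intervalIntegrable 0 x)
      (hfc.stronglyMeasurableAtFilter _ _)
      hfc.continuousAt
  have hF0 : F 0 = 0 := by rw [hF]; simp
  set h : ℝ → ℝ := fun u => θ * u * f u - (1 + θ) * F u with hh
  have hhderiv : ∀ x : ℝ, HasDerivAt h (θ * x * deriv f x - f x) x := by
    intro x
    have hfd : HasDerivAt f (deriv f x) x :=
      ((hf.differentiable one_ne_zero) x).hasDerivAt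
    have h1 : HasDerivAt (fun u => θ * u * f u)
        (θ * f x + θ * x * deriv f x) x := by
      have := ((hasDerivAt_id x).const_mul θ).mul hfd
      exact this.congr_deriv (by simp only [id_eq, mul_one])
    have := h1.sub ((hFderiv x).const_mul (1 + θ))
    exact this.congr_deriv (by ring)
  have hhdiff : Differentiable ℝ h := fun x => (hhderiv x).differentiableAt
  have hderiv_eq : ∀ x, deriv h x = θ * x * deriv f x - f x := fun x =>
    (hhderiv x).deriv
  have hh0 : h 0 = 0 := by simp [hh, hF0]
  have hkey : ∀ u : ℝ, 0 ≤ h u := by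
    intro u
    rcases lt_trichotomy u 0 with hu | hu | hu
    · have hanti : AntitoneOn h (Set.Iic 0) := by
        apply antitoneOn_of_deriv_nonpos (convex_Iic 0) hhdiff.continuous.continuousOn
        · exact fun x _ => (hhdiff x).differentiableWithinAt
        · intro x hx
          rw [interior_Iic] at hx
          have hxne : x ≠ 0 := ne_of_lt hx
          have hc := (hcond x hxne).2
          rw [hderiv_eq]
          have : θ * x * deriv f x ≤ f x := by
            have := mul_le_mul_of_nonpos_left hc (le_of_lt hx)
            rw [mul_div_cancel₀ _ hxne] at this
            nlinarith
          linarith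
      have := hanti (le_of_lt hu) (le_refl (0:ℝ)) (le_of_lt hu)
      linarith [hh0 ▸ this]
    · simp [hu, hh0]
    · have hmono : MonotoneOn h (Set.Ici 0) := by
        apply monotoneOn_of_deriv_nonneg (convex_Ici 0) hhdiff.continuous.continuousOn
        · exact fun x _ => (hhdiff x).differentiableWithinAt
        · intro x hx
          rw [interior_Ici] at hx
          have hxne : x ≠ 0 := ne_of_gt hx
          have hc := (hcond x hxne).2
          rw [hderiv_eq]
          have : f x ≤ θ * x * deriv f x := by
            have := mul_le_mul_of_nonneg_left hc (le_of_lt hx)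
            rw [mul_div_cancel₀ _ hxne] at this
            nlinarith
          linarith
      have := hmono (le_refl (0:ℝ)) (le_of_lt hu) (le_of_lt hu)
      linarith [hh0 ▸ this]
  have hcoef : 0 < 1 / 2 - θ / (1 + θ) := by
    rw [sub_pos, div_lt_div_iff₀ h1θ (by norm_num : (0:ℝ) < 2)]
    linarith
  have hmain : ∀ u : ℝ, u ≠ 0 →
      g u ≥ (1 / 2 - θ / (1 + θ)) * (f u * u) ∧
      0 < (1 / 2 - θ / (1 + θ)) * (f u * u) := by
    intro u hu
    have hfu : 0 < f u * u := by
      have := (hcond u hu).1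
      have h2 : 0 < (f u / u) * (u * u) := mul_pos this (mul_self_pos.mpr hu)
      calc (0:ℝ) < (f u / u) * (u * u) := h2
        _ = f u * u := by field_simp
    constructor
    · have hF_le : F u ≤ θ / (1 + θ) * (f u * u) := by
        have := hkey u
        rw [hh] at this
        simp only at this
        rw [div_mul_eq_mul_div, le_div_iff₀ h1θ]
        nlinarith
      rw [hg]
      nlinarith
    · exact mul_pos hcoef hfu
  refine ⟨hmain, ?_, ?_⟩
  · rw [hg]; simp [hF0]
  · intro u
    rcases eq_or_ne u 0 with hu | hu
    · rw [hu, hg]; simp [hF0]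
    · linarith [(hmain u hu).1, (hmain u hu).2]
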